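/- arXiv:1903.10340 — 5 statements merged into one kernel-verified Lean document; each statement's English description precedes it below -/
import Mathlib

section
/- Let δ ≥ 0, p ≥ 0, γ > 0, Ste > 0, F(x) = x + (δ/(p+1))·x^(p+1), β_γ(x) = 1 − (2x·exp(x²))/(γ·Ste), f(x) = x·exp(x²)·erf(x), and let λ₀ > 0 be the unique root of β_γ. Then there exists a unique λ_γ ∈ (0, λ₀) such that F(β_γ(λ_γ)) = (√π/Ste)·f(λ_γ). -/
open Real

noncomputable def erf (x : ℝ) : ℝ := (2 / Real.sqrt π) * ∫ t in (0:ℝ)..x, Real.exp (-t^2)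

lemma exp_neg_sq_cont : Continuous fun t : ℝ => Real.exp (-t^2) := by continuity

lemma erf_continuous : Continuous erf := by
  apply Continuous.mul continuous_const
  exact intervalIntegral.continuous_primitive
    (fun a b => (exp_neg_sq_cont).intervalIntegrable a b) 0

lemma erf_zero : erf 0 = 0 := by simp [erf]

lemma erf_pos {x : ℝ} (hx : 0 < x) : 0 < erf x := by
  apply mul_pos
  · have := Real.pi_pos
    positivity
  · exact intervalIntegral.intervalIntegral_pos_of_pos_on
      ((exp_neg_sq_cont).intervalIntegrable 0 x)
      (fun t _ => Real.exp_pos _) hx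

lemma erf_mono {x y : ℝ} (hxy : x ≤ y) : erf x ≤ erf y := by
  have := Real.pi_pos
  apply mul_le_mul_of_nonneg_left _ (by positivity)
  have hsplit : (∫ t in (0:ℝ)..x, Real.exp (-t^2)) + ∫ t in x..y, Real.exp (-t^2)
      = ∫ t in (0:ℝ)..y, Real.exp (-t^2) :=
    intervalIntegral.integral_add_adjacent_intervals
      ((exp_neg_sq_cont).intervalIntegrable 0 x)
      ((exp_neg_sq_cont).intervalIntegrable x y)
  have hpos : 0 ≤ ∫ t in x..y, Real.exp (-t^2) :=
    intervalIntegral.integral_nonneg hxy (fun t _ => (Real.exp_pos _).le)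
  linarith

lemma erf_nonneg {x : ℝ} (hx : 0 ≤ x) : 0 ≤ erf x := by
  simpa [erf_zero] using erf_mono hx

lemma A_strict {x y : ℝ} (hx : 0 ≤ x) (hxy : x < y) :
    x * Real.exp (x^2) < y * Real.exp (y^2) := by
  have h2 : x^2 < y^2 := by nlinarith
  have := Real.exp_lt_exp.2 h2
  nlinarith [Real.exp_pos (x^2), Real.exp_pos (y^2)]

/-- Existence and uniqueness of λ_γ ∈ (0, λ₀) solving F(β_γ(λ_γ)) = (√π/Ste)·f(λ_γ). -/
theorem exists_unique_lambda_gamma (δ p γ Ste l₀ : ℝ) (hδ : 0 ≤ δ) (hp : 0 ≤ p)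
    (hγ : 0 < γ) (hSte : 0 < Ste) (hl₀ : 0 < l₀)
    (hroot : 1 - (2 * l₀ * Real.exp (l₀^2)) / (γ * Ste) = 0) :
    ∃! lγ : ℝ, lγ ∈ Set.Ioo 0 l₀ ∧
      ((1 - (2 * lγ * Real.exp (lγ^2)) / (γ * Ste)) +
        (δ / (p + 1)) * (1 - (2 * lγ * Real.exp (lγ^2)) / (γ * Ste)) ^ (p + 1)) =
      (Real.sqrt π / Ste) * (lγ * Real.exp (lγ^2) * erf lγ) := by
  have hπ := Real.pi_pos
  have hγS : 0 < γ * Ste := mul_pos hγ hSte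
  have hp1 : (0:ℝ) < p + 1 := by linarith
  set β : ℝ → ℝ := fun x => 1 - (2 * x * Real.exp (x^2)) / (γ * Ste) with hβ
  set g : ℝ → ℝ := fun x =>
    (β x + (δ / (p + 1)) * (β x) ^ (p + 1)) -
      (Real.sqrt π / Ste) * (x * Real.exp (x^2) * erf x) with hg
  -- β is strictly decreasing on [0, ∞)
  have hβanti : ∀ x y : ℝ, 0 ≤ x → x < y → β y < β x := by
    intro x y hx hxy
    have h1 : 2 * x * Real.exp (x^2) < 2 * y * Real.exp (y^2) := by
      have := A_strict hx hxy; nlinarith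
    have h2 : (2 * x * Real.exp (x^2)) / (γ * Ste) <
        (2 * y * Real.exp (y^2)) / (γ * Ste) := (div_lt_div_iff_of_pos_right hγS).2 h1
    simp only [hβ]
    linarith
  have hβl₀ : β l₀ = 0 := hroot
  have hβnonneg : ∀ x : ℝ, x ≤ l₀ → 0 ≤ β x := by
    intro x hx
    rcases eq_or_lt_of_le hx with rfl | hlt
    · exact le_of_eq hβl₀.symm
    · rcases le_or_gt 0 x with hx0 | hx0
      · linarith [hβanti x l₀ hx0 hlt]
      · have hA : x * Real.exp (x^2) ≤ 0 :=
          mul_nonpos_of_nonpos_of_nonneg hx0.le (Real.exp_pos _).le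
        have : (2 * x * Real.exp (x^2)) / (γ * Ste) ≤ 0 := by
          apply div_nonpos_of_nonpos_of_nonneg _ hγS.le
          nlinarith
        simp only [hβ]; linarith
  -- g is strictly decreasing on [0, l₀]
  have hganti : StrictAntiOn g (Set.Icc 0 l₀) := by
    intro x hx y hy hxy
    have hβy : 0 ≤ β y := hβnonneg y hy.2
    have hβlt : β y < β x := hβanti x y hx.1 hxy
    have hF : β y + (δ / (p + 1)) * (β y) ^ (p + 1) <
        β x + (δ / (p + 1)) * (β x) ^ (p + 1) := by
      have hrp : (β y) ^ (p + 1) ≤ (β x) ^ (p + 1) :=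
        Real.rpow_le_rpow hβy hβlt.le hp1.le
      have hc : 0 ≤ δ / (p + 1) := div_nonneg hδ hp1.le
      exact add_lt_add_of_lt_of_le hβlt (mul_le_mul_of_nonneg_left hrp hc)
    have hR : x * Real.exp (x^2) * erf x ≤ y * Real.exp (y^2) * erf y := by
      have h1 : 0 ≤ x * Real.exp (x^2) :=
        mul_nonneg hx.1 (Real.exp_pos _).le
      have h2 : x * Real.exp (x^2) ≤ y * Real.exp (y^2) := (A_strict hx.1 hxy).le
      exact mul_le_mul h2 (erf_mono hxy.le) (erf_nonneg hx.1)
        (by nlinarith [Real.exp_pos (y^2)])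
    have hc2 : 0 ≤ Real.sqrt π / Ste := by positivity
    simp only [hg]
    have := mul_le_mul_of_nonneg_left hR hc2
    linarith
  -- g is continuous
  have hβcont : Continuous β := by
    have h1 : Continuous fun x : ℝ => 2 * x * Real.exp (x^2) := by fun_prop
    exact continuous_const.sub (h1.div_const _)
  have hgcont : Continuous g := by
    apply Continuous.sub
    · apply hβcont.add
      apply Continuous.mul continuous_const
      exact hβcont.rpow_const (fun x => Or.inr hp1.le)
    · apply Continuous.mul continuous_const
      exact (Continuous.mul (by fun_prop) erf_continuous)
  -- endpoint values
  have hg0 : 0 < g 0 := by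
    have hβ0 : β 0 = 1 := by simp [hβ]
    simp only [hg, hβ0, erf_zero, Real.one_rpow]
    have hc : 0 ≤ δ / (p + 1) := div_nonneg hδ hp1.le
    simp
    linarith
  have hgl₀ : g l₀ < 0 := by
    have hz : (0:ℝ) ^ (p + 1) = 0 := Real.zero_rpow (by linarith)
    have hRpos : 0 < (Real.sqrt π / Ste) * (l₀ * Real.exp (l₀^2) * erf l₀) := by
      have h1 : 0 < l₀ * Real.exp (l₀^2) := mul_pos hl₀ (Real.exp_pos _)
      have h2 : 0 < erf l₀ := erf_pos hl₀
      have h3 : 0 < Real.sqrt π / Ste := by positivity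
      positivity
    simp only [hg, hβl₀, hz]
    linarith
  -- IVT
  have hsub : Set.Ioo (g l₀) (g 0) ⊆ g '' Set.Ioo 0 l₀ :=
    intermediate_value_Ioo' hl₀.le hgcont.continuousOn
  obtain ⟨x, hxmem, hxval⟩ := hsub ⟨hgl₀, hg0⟩
  have key : ∀ z : ℝ, (((1 - (2 * z * Real.exp (z^2)) / (γ * Ste)) +
        (δ / (p + 1)) * (1 - (2 * z * Real.exp (z^2)) / (γ * Ste)) ^ (p + 1)) =
      (Real.sqrt π / Ste) * (z * Real.exp (z^2) * erf z)) ↔ g z = 0 := by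
    intro z
    simp only [hg, hβ, sub_eq_zero]
  refine ⟨x, ⟨hxmem, (key x).2 hxval⟩, ?_⟩
  rintro y ⟨hymem, hyval⟩
  have hy0 : g y = 0 := (key y).1 hyval
  have hx0 : g x = 0 := hxval
  exact hganti.injOn (Set.mem_Icc_of_Ioo hymem) (Set.mem_Icc_of_Ioo hxmem)
    (by rw [hy0, hx0])
end

section
/- With the same notation, for every γ > 0 one has λ_γ < λ, where λ > 0 is the unique solution of λ·exp(λ²)·erf(λ) = (Ste/√π)·(1 + δ/(p+1)). -/
open Real

lemma expsq_intable (a b : ℝ) :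
    IntervalIntegrable (fun t : ℝ => Real.exp (-t^2)) MeasureTheory.volume a b :=
  (Real.continuous_exp.comp (continuous_neg.comp (continuous_pow 2))).intervalIntegrable a b

lemma erf_mono_s12 {a b : ℝ} (hab : a ≤ b) : erf a ≤ erf b := by
  unfold erf
  have h : (∫ t in (0:ℝ)..a, Real.exp (-t^2)) ≤ ∫ t in (0:ℝ)..b, Real.exp (-t^2) := by
    have hsplit := intervalIntegral.integral_add_adjacent_intervals
      (expsq_intable 0 a) (expsq_intable a b)
    have hpos : 0 ≤ ∫ t in a..b, Real.exp (-t^2) :=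
      intervalIntegral.integral_nonneg hab (fun t _ => (Real.exp_pos _).le)
    linarith
  have h2 : (0:ℝ) ≤ 2 / Real.sqrt π := by positivity
  exact mul_le_mul_of_nonneg_left h h2

lemma erf_pos_s12 {a : ℝ} (ha : 0 < a) : 0 < erf a := by
  unfold erf
  have h : 0 < ∫ t in (0:ℝ)..a, Real.exp (-t^2) := by
    apply intervalIntegral.intervalIntegral_pos_of_pos_on (expsq_intable 0 a)
      (fun t _ => Real.exp_pos _) ha
  have h2 : (0:ℝ) < 2 / Real.sqrt π := by
    have := Real.sqrt_pos.mpr Real.pi_pos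
    positivity

  exact mul_pos h2 h

lemma g_mono {a b : ℝ} (ha : 0 < a) (hab : a ≤ b) :
    a * Real.exp (a^2) * erf a ≤ b * Real.exp (b^2) * erf b := by
  have h1 : a * Real.exp (a^2) ≤ b * Real.exp (b^2) := by
    apply mul_le_mul hab (Real.exp_le_exp.mpr (by nlinarith)) (Real.exp_pos _).le
      (by linarith)
  exact mul_le_mul h1 (erf_mono_s12 hab) (erf_pos_s12 ha).le
    (by nlinarith [Real.exp_pos (b^2)])

/-- For every γ > 0 one has λ_γ < λ. -/
theorem lambda_gamma_lt_lambda (δ p Ste γ l lγ : ℝ) (hδ : 0 ≤ δ) (hp : 0 ≤ p)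
    (hSte : 0 < Ste) (hγ : 0 < γ) (hl : 0 < l) (hlγ : 0 < lγ)
    (hlam : l * Real.exp (l^2) * erf l = (Ste / Real.sqrt π) * (1 + δ / (p + 1)))
    (hβ : 0 ≤ 1 - (2 * lγ * Real.exp (lγ^2)) / (γ * Ste))
    (heqγ : (1 - (2 * lγ * Real.exp (lγ^2)) / (γ * Ste)) +
        (δ / (p + 1)) * (1 - (2 * lγ * Real.exp (lγ^2)) / (γ * Ste)) ^ (p + 1) =
      (Real.sqrt π / Ste) * (lγ * Real.exp (lγ^2) * erf lγ)) :
    lγ < l := by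
  set β := 1 - (2 * lγ * Real.exp (lγ^2)) / (γ * Ste) with hβdef
  clear_value β
  have hsq : 0 < Real.sqrt π := Real.sqrt_pos.mpr Real.pi_pos
  have hβlt : β < 1 := by
    have : 0 < (2 * lγ * Real.exp (lγ^2)) / (γ * Ste) := by
      have := Real.exp_pos (lγ^2); positivity
    simp only [hβdef]; linarith
  have hpow : β ^ (p + 1) ≤ 1 :=
    Real.rpow_le_one hβ hβlt.le (by linarith)
  have hdp : 0 ≤ δ / (p + 1) := by positivity
  have hlt : (Real.sqrt π / Ste) * (lγ * Real.exp (lγ^2) * erf lγ) < 1 + δ / (p + 1) := by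
    rw [← heqγ]
    have h2 : δ / (p + 1) * β ^ (p + 1) ≤ δ / (p + 1) * 1 :=
      mul_le_mul_of_nonneg_left hpow hdp
    linarith
  have hleq : (Real.sqrt π / Ste) * (l * Real.exp (l^2) * erf l) = 1 + δ / (p + 1) := by
    rw [hlam]; field_simp
  have hglt : lγ * Real.exp (lγ^2) * erf lγ < l * Real.exp (l^2) * erf l := by
    have hc : 0 < Real.sqrt π / Ste := by positivity
    rw [← hleq] at hlt
    exact lt_of_mul_lt_mul_left hlt hc.le
  by_contra h
  push_neg at h
  exact absurd hglt (not_lt.mpr (g_mono hl h))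
end

section
/- Let δ ≥ 0, p ≥ 0, γ > 0, Ste > 0 and let λ_γ solve F(β_γ(λ_γ)) = (√π/Ste)·λ_γ·exp(λ_γ²)·erf(λ_γ). Define y_γ(η) = F⁻¹(G_γ(η)) with G_γ(η) = (√π/Ste)·λ_γ·exp(λ_γ²)·(erf(λ_γ) − erf(η)). Then y_γ(0) = β_γ(λ_γ) = 1 − (2λ_γ·exp(λ_γ²))/(γ·Ste), and 0 ≤ y_γ(η) ≤ y_γ(0) < 1 for all η ∈ [0, λ_γ]. -/
open Real

/-- y_γ(0) = β_γ(λ_γ) = 1 - 2λ_γ exp(λ_γ²)/(γ Ste), and 0 ≤ y_γ(η) ≤ y_γ(0) < 1 on [0, λ_γ]. -/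
theorem y_gamma_bounds (δ p γ Ste lγ : ℝ) (hδ : 0 ≤ δ) (hp : 0 ≤ p)
    (hγ : 0 < γ) (hSte : 0 < Ste) (hlγ : 0 < lγ)
    (hβ : 0 ≤ 1 - (2 * lγ * Real.exp (lγ^2)) / (γ * Ste))
    (heq : (1 - (2 * lγ * Real.exp (lγ^2)) / (γ * Ste)) +
        (δ / (p + 1)) * (1 - (2 * lγ * Real.exp (lγ^2)) / (γ * Ste)) ^ (p + 1) =
      (Real.sqrt π / Ste) * (lγ * Real.exp (lγ^2) * erf lγ))
    (Finv : ℝ → ℝ)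
    (hFinvMaps : ∀ x ≥ (0:ℝ), 0 ≤ Finv x)
    (hFinvLeft : ∀ x ≥ (0:ℝ), Finv (x + (δ / (p + 1)) * x ^ (p + 1)) = x)
    (hFinvRight : ∀ x ≥ (0:ℝ), Finv x + (δ / (p + 1)) * (Finv x) ^ (p + 1) = x)
    (yγ : ℝ → ℝ)
    (hyγ : yγ = fun η =>
      Finv ((Real.sqrt π / Ste) * lγ * Real.exp (lγ^2) * (erf lγ - erf η))) :
    yγ 0 = 1 - (2 * lγ * Real.exp (lγ^2)) / (γ * Ste) ∧
    (∀ η ∈ Set.Icc 0 lγ, 0 ≤ yγ η ∧ yγ η ≤ yγ 0) ∧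
    yγ 0 < 1 := by
  set β := 1 - (2 * lγ * Real.exp (lγ^2)) / (γ * Ste) with hβdef
  have herf0 : erf 0 = 0 := by simp [erf]
  have hcont : Continuous fun t : ℝ => Real.exp (-t^2) := by continuity
  have hβlt : β < 1 := by
    have h1 : 0 < (2 * lγ * Real.exp (lγ^2)) / (γ * Ste) := by positivity
    simp only [hβdef]; linarith
  have hy0 : yγ 0 = β := by
    rw [hyγ]
    simp only [herf0, sub_zero]
    have h : (Real.sqrt π / Ste) * lγ * Real.exp (lγ^2) * erf lγ
        = β + (δ / (p + 1)) * β ^ (p + 1) := by rw [heq]; ring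
    rw [h, hFinvLeft β hβ]
  refine ⟨hy0, ?_, hy0 ▸ hβlt⟩
  intro η hη
  obtain ⟨hη0, hηl⟩ := hη
  have hsplit : erf lγ - erf η = (2 / Real.sqrt π) * ∫ t in η..lγ, Real.exp (-t^2) := by
    rw [erf, erf, ← mul_sub]
    congr 1
    rw [← intervalIntegral.integral_add_adjacent_intervals
      (hcont.intervalIntegrable 0 η) (hcont.intervalIntegrable η lγ)]
    ring
  have hdiff : 0 ≤ erf lγ - erf η := by
    rw [hsplit]
    apply mul_nonneg (by positivity)
    exact intervalIntegral.integral_nonneg hηl (fun t _ => (Real.exp_pos _).le)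
  have herfη : 0 ≤ erf η := by
    rw [erf]
    apply mul_nonneg (by positivity)
    exact intervalIntegral.integral_nonneg hη0 (fun t _ => (Real.exp_pos _).le)
  have hC : 0 ≤ Real.sqrt π / Ste * lγ * Real.exp (lγ^2) := by positivity
  have hG : 0 ≤ (Real.sqrt π / Ste) * lγ * Real.exp (lγ^2) * (erf lγ - erf η) :=
    mul_nonneg hC hdiff
  have hGle : (Real.sqrt π / Ste) * lγ * Real.exp (lγ^2) * (erf lγ - erf η)
      ≤ β + (δ / (p + 1)) * β ^ (p + 1) := by
    rw [heq]
    have : (Real.sqrt π / Ste) * lγ * Real.exp (lγ^2) * (erf lγ - erf η)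
        ≤ (Real.sqrt π / Ste) * lγ * Real.exp (lγ^2) * erf lγ := by
      apply mul_le_mul_of_nonneg_left (by linarith) hC
    linarith [this]
  constructor
  · rw [hyγ]; exact hFinvMaps _ hG
  · rw [hy0]
    simp only [hyγ]
    by_contra hcon
    push_neg at hcon
    set G := (Real.sqrt π / Ste) * lγ * Real.exp (lγ^2) * (erf lγ - erf η) with hGdef
    have hFG : Finv G + (δ / (p + 1)) * (Finv G) ^ (p + 1) = G := hFinvRight G hG
    have hrpow : β ^ (p + 1) ≤ (Finv G) ^ (p + 1) :=
      Real.rpow_le_rpow hβ hcon.le (by linarith)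
    have hc : 0 ≤ δ / (p + 1) := by positivity
    have hmul := mul_le_mul_of_nonneg_left hrpow hc
    have hlt : β + (δ / (p + 1)) * β ^ (p + 1)
        < Finv G + (δ / (p + 1)) * (Finv G) ^ (p + 1) :=
      add_lt_add_of_lt_of_le hcon hmul
    rw [hFG] at hlt
    exact absurd hGle (not_le.mpr hlt)
end

section
/- Let λ > 0, Ste > 0, a > 0, T₀ > T_f, and suppose y : [0, λ] → ℝ is C² and solves the reduced ODE problem 2η(1+δy^p)y′ + [(1+δy^p)y′]′ = 0, y(0)=1, y(λ)=0, y′(λ) = −2λ/Ste. Define T(x,t) = (T₀ − T_f)·y(x/(2a√t)) + T_f for 0 < x < s(t), t > 0, and s(t) = 2aλ√t. Then T satisfies the PDE ρ·c(T)·∂T/∂t = ∂/∂x(k(T)·∂T/∂x) on {0 < x < s(t), t > 0}, with T(0,t) = T₀, T(s(t),t) = T_f, and k₀·∂T/∂x(s(t),t) = −ρ·l·s′(t). -/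
open Real

/-- If y solves the reduced ODE problem, then T(x,t) = (T₀−T_f) y(x/(2a√t)) + T_f and
s(t) = 2aλ√t solve the one-phase Stefan problem with Dirichlet condition at x = 0. -/
theorem similarity_solution_solves_stefan
    (δ p Ste l ρ latent k₀ c₀ a T₀ Tf : ℝ)
    (hδ : 0 ≤ δ) (hp : 0 ≤ p) (hSte : 0 < Ste) (hl : 0 < l)
    (hρ : 0 < ρ) (hlatent : 0 < latent) (hk₀ : 0 < k₀) (hc₀ : 0 < c₀)
    (ha : 0 < a) (hT : Tf < T₀)
    (ha2 : a ^ 2 = k₀ / (ρ * c₀)) (hSteDef : Ste = c₀ * (T₀ - Tf) / latent)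
    (y dy : ℝ → ℝ)
    (hynn : ∀ η ∈ Set.Icc 0 l, 0 ≤ y η)
    (hy' : ∀ η ∈ Set.Icc 0 l, HasDerivAt y (dy η) η)
    (hODE : ∀ η ∈ Set.Ioo 0 l,
      HasDerivAt (fun t => (1 + δ * (y t) ^ p) * dy t)
        (-(2 * η * (1 + δ * (y η) ^ p) * dy η)) η)
    (hy0 : y 0 = 1) (hyl : y l = 0) (hdyl : dy l = -(2 * l / Ste))
    (k c : ℝ → ℝ)
    (hk : k = fun θ => k₀ * (1 + δ * ((θ - Tf) / (T₀ - Tf)) ^ p))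
    (hc : c = fun θ => c₀ * (1 + δ * ((θ - Tf) / (T₀ - Tf)) ^ p))
    (T : ℝ → ℝ → ℝ) (s : ℝ → ℝ)
    (hT' : T = fun x t => (T₀ - Tf) * y (x / (2 * a * Real.sqrt t)) + Tf)
    (hs : s = fun t => 2 * a * l * Real.sqrt t) :
    (∀ t > (0:ℝ), ∀ x ∈ Set.Ioo 0 (s t),
      ρ * c (T x t) * deriv (fun τ => T x τ) t =
        deriv (fun ξ => k (T ξ t) * deriv (fun ξ' => T ξ' t) ξ) x) ∧
    (∀ t > (0:ℝ), T 0 t = T₀) ∧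
    (∀ t > (0:ℝ), T (s t) t = Tf) ∧
    (∀ t > (0:ℝ), k₀ * deriv (fun ξ => T ξ t) (s t) = -(ρ * latent * deriv s t)) ∧
    s 0 = 0 := by
  subst hT' hs hk hc
  have hTT : (0:ℝ) < T₀ - Tf := sub_pos.mpr hT
  have hTT' : T₀ - Tf ≠ 0 := ne_of_gt hTT
  have hk₀' : k₀ = ρ * c₀ * a ^ 2 := by
    rw [ha2]; field_simp
  -- spatial derivative of T at any point with η ∈ Icc 0 l
  have hTd : ∀ t > (0:ℝ), ∀ ξ : ℝ, ξ / (2 * a * Real.sqrt t) ∈ Set.Icc 0 l →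
      HasDerivAt (fun ξ' => (T₀ - Tf) * y (ξ' / (2 * a * Real.sqrt t)) + Tf)
        ((T₀ - Tf) * (dy (ξ / (2 * a * Real.sqrt t)) * (2 * a * Real.sqrt t)⁻¹)) ξ := by
    intro t ht ξ hξ
    have h1 : HasDerivAt (fun ξ' : ℝ => ξ' / (2 * a * Real.sqrt t))
        ((2 * a * Real.sqrt t)⁻¹) ξ := by
      simpa using (hasDerivAt_id ξ).div_const (2 * a * Real.sqrt t)
    have h2 := ((hy' _ hξ).comp ξ h1)
    exact ((h2.const_mul (T₀ - Tf)).add_const Tf)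
  refine ⟨?_, ?_, ?_, ?_, ?_⟩
  · -- PDE
    intro t ht x hx
    have hst : (0:ℝ) < Real.sqrt t := Real.sqrt_pos.mpr ht
    have hstm : Real.sqrt t * Real.sqrt t = t := Real.mul_self_sqrt ht.le
    set A := 2 * a * Real.sqrt t with hAdef
    have hA : (0:ℝ) < A := by positivity
    set η₀ := x / A with hη₀def
    have hη₀ : η₀ ∈ Set.Ioo 0 l := by
      constructor
      · exact div_pos hx.1 hA
      · rw [hη₀def, div_lt_iff₀ hA]
        calc x < 2 * a * l * Real.sqrt t := hx.2
        _ = l * A := by rw [hAdef]; ring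
    -- time derivative
    have hsq := Real.hasDerivAt_sqrt (ne_of_gt ht)
    have h3 : HasDerivAt (fun τ : ℝ => 2 * a * Real.sqrt τ)
        (2 * a * (1 / (2 * Real.sqrt t))) t := hsq.const_mul (2 * a)
    have h4 : HasDerivAt (fun τ : ℝ => x / (2 * a * Real.sqrt τ))
        ((0 * A - x * (2 * a * (1 / (2 * Real.sqrt t)))) / A ^ 2) t :=
      (hasDerivAt_const t x).div h3 (ne_of_gt hA)
    have h5 := ((hy' η₀ (Set.mem_Icc_of_Ioo hη₀)).comp t h4)
    have h6 := (h5.const_mul (T₀ - Tf)).add_const Tf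
    have hTime : deriv (fun τ => (T₀ - Tf) * y (x / (2 * a * Real.sqrt τ)) + Tf) t
        = (T₀ - Tf) * (dy η₀ * ((0 * A - x * (2 * a * (1 / (2 * Real.sqrt t)))) / A ^ 2)) :=
      h6.deriv
    -- the flux function agrees near x with a nice function g
    have hg : ∀ ξ ∈ Set.Ioo (0:ℝ) (2 * a * l * Real.sqrt t),
        (fun θ => k₀ * (1 + δ * ((θ - Tf) / (T₀ - Tf)) ^ p))
            ((T₀ - Tf) * y (ξ / A) + Tf) *
          deriv (fun ξ' => (T₀ - Tf) * y (ξ' / A) + Tf) ξ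
        = k₀ * (T₀ - Tf) * A⁻¹ * ((1 + δ * (y (ξ / A)) ^ p) * dy (ξ / A)) := by
      intro ξ hξ
      have hξI : ξ / A ∈ Set.Icc 0 l := by
        constructor
        · exact le_of_lt (div_pos hξ.1 hA)
        · rw [div_le_iff₀ hA]
          calc ξ ≤ 2 * a * l * Real.sqrt t := le_of_lt hξ.2
          _ = l * A := by rw [hAdef]; ring
      have hd := (hTd t ht ξ hξI).deriv
      rw [hd]
      have : ((T₀ - Tf) * y (ξ / A) + Tf - Tf) / (T₀ - Tf) = y (ξ / A) := by
        field_simp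
        ring
      simp only [this]; ring
    have hmem : Set.Ioo (0:ℝ) (2 * a * l * Real.sqrt t) ∈ nhds x :=
      isOpen_Ioo.mem_nhds hx
    have heq : (fun ξ => (fun θ => k₀ * (1 + δ * ((θ - Tf) / (T₀ - Tf)) ^ p))
            ((T₀ - Tf) * y (ξ / A) + Tf) *
          deriv (fun ξ' => (T₀ - Tf) * y (ξ' / A) + Tf) ξ)
        =ᶠ[nhds x] (fun ξ => k₀ * (T₀ - Tf) * A⁻¹ *
          ((1 + δ * (y (ξ / A)) ^ p) * dy (ξ / A))) :=
      Filter.eventuallyEq_of_mem hmem hg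
    -- derivative of g
    have h1 : HasDerivAt (fun ξ' : ℝ => ξ' / A) A⁻¹ x := by
      simpa using (hasDerivAt_id x).div_const A
    have h7 := ((hODE η₀ hη₀).comp x h1).const_mul (k₀ * (T₀ - Tf) * A⁻¹)
    have hSpace : deriv (fun ξ => k₀ * (T₀ - Tf) * A⁻¹ *
          ((1 + δ * (y (ξ / A)) ^ p) * dy (ξ / A))) x
        = k₀ * (T₀ - Tf) * A⁻¹ *
            (-(2 * η₀ * (1 + δ * (y η₀) ^ p) * dy η₀) * A⁻¹) := h7.deriv
    rw [heq.deriv_eq, hSpace, hTime]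
    have hc' : ((T₀ - Tf) * y (x / A) + Tf - Tf) / (T₀ - Tf) = y (x / A) := by
      field_simp
      ring
    simp only [← hAdef, hc']
    rw [hη₀def, hk₀']
    have hA2 : A ^ 2 = 4 * a ^ 2 * t := by
      rw [hAdef, mul_pow, Real.sq_sqrt ht.le]; ring
    field_simp
    ring_nf
    rw [hAdef]; ring
  · intro t ht
    simp [hy0]
  · intro t ht
    have hst : (0:ℝ) < Real.sqrt t := Real.sqrt_pos.mpr ht
    have : 2 * a * l * Real.sqrt t / (2 * a * Real.sqrt t) = l := by
      field_simp
    simp [this, hyl]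
  · -- Stefan condition
    intro t ht
    have hst : (0:ℝ) < Real.sqrt t := Real.sqrt_pos.mpr ht
    have hA : (0:ℝ) < 2 * a * Real.sqrt t := by positivity
    have hratio : 2 * a * l * Real.sqrt t / (2 * a * Real.sqrt t) = l := by
      field_simp
    have hξI : 2 * a * l * Real.sqrt t / (2 * a * Real.sqrt t) ∈ Set.Icc 0 l := by
      rw [hratio]; exact ⟨hl.le, le_refl l⟩
    have hd := (hTd t ht (2 * a * l * Real.sqrt t) hξI).deriv
    rw [hratio] at hd
    have hds : deriv (fun τ : ℝ => 2 * a * l * Real.sqrt τ) t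
        = 2 * a * l * (1 / (2 * Real.sqrt t)) :=
      ((Real.hasDerivAt_sqrt (ne_of_gt ht)).const_mul (2 * a * l)).deriv
    rw [hd, hds, hdyl, hk₀']
    have hSte' : T₀ - Tf = Ste * latent / c₀ := by
      rw [hSteDef]; field_simp
    rw [hSte']
    field_simp
  · simp
end

section
/- Let δ ≥ 0, p ≥ 0, Ste > 0 and let g = (Ste/√π)·(1 + δ/(p+1)). If λ(p) denotes the unique positive solution of x·exp(x²)·erf(x) = (Ste/√π)·(1 + δ/(p+1)), then λ(p) is decreasing in p: for 0 ≤ p₁ < p₂, λ(p₂) ≤ λ(p₁), with strict inequality if δ > 0. -/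
open Real

lemma erf_strictMono {a b : ℝ} (ha : 0 ≤ a) (hab : a < b) : erf a < erf b := by
  unfold erf
  have hint : ∀ u v : ℝ, IntervalIntegrable (fun t => Real.exp (-t^2)) MeasureTheory.volume u v :=
    fun u v => (Real.continuous_exp.comp (by continuity)).intervalIntegrable u v
  have h : (∫ t in (0:ℝ)..a, Real.exp (-t^2)) < ∫ t in (0:ℝ)..b, Real.exp (-t^2) := by
    have hsplit : (∫ t in (0:ℝ)..b, Real.exp (-t^2)) =
        (∫ t in (0:ℝ)..a, Real.exp (-t^2)) + ∫ t in a..b, Real.exp (-t^2) :=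
      (intervalIntegral.integral_add_adjacent_intervals (hint 0 a) (hint a b)).symm
    have hpos : 0 < ∫ t in a..b, Real.exp (-t^2) := by
      apply intervalIntegral.intervalIntegral_pos_of_pos_on (hint a b)
      · intro t _; positivity
      · exact hab
    linarith
  have h2 : 0 < 2 / Real.sqrt π := by positivity
  exact (mul_lt_mul_iff_right₀ h2).mpr h

lemma f_strictMono {a b : ℝ} (ha : 0 < a) (hab : a < b) :
    a * Real.exp (a^2) * erf a < b * Real.exp (b^2) * erf b := by
  have hb : 0 < b := ha.trans hab
  have h1 : a * Real.exp (a^2) < b * Real.exp (b^2) := by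
    apply mul_lt_mul' hab.le _ (Real.exp_pos _).le hb
    · exact Real.exp_lt_exp.mpr (by nlinarith)
  exact mul_lt_mul h1 (erf_strictMono ha.le hab).le (erf_pos ha) (by positivity)

/-- λ(p) is decreasing in p: for 0 ≤ p₁ < p₂ one has λ(p₂) ≤ λ(p₁),
with strict inequality if δ > 0. -/
theorem lambda_decreasing_in_p (δ Ste p₁ p₂ l₁ l₂ : ℝ) (hδ : 0 ≤ δ)
    (hSte : 0 < Ste) (hp₁ : 0 ≤ p₁) (hp₁₂ : p₁ < p₂)
    (hl₁ : 0 < l₁) (hl₂ : 0 < l₂)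
    (heq₁ : l₁ * Real.exp (l₁^2) * erf l₁ = (Ste / Real.sqrt π) * (1 + δ / (p₁ + 1)))
    (heq₂ : l₂ * Real.exp (l₂^2) * erf l₂ = (Ste / Real.sqrt π) * (1 + δ / (p₂ + 1))) :
    l₂ ≤ l₁ ∧ (0 < δ → l₂ < l₁) := by
  have hc : 0 < Ste / Real.sqrt π := by
    have := Real.sqrt_pos.mpr Real.pi_pos
    positivity
  have hle : δ / (p₂ + 1) ≤ δ / (p₁ + 1) :=
    div_le_div_of_nonneg_left hδ (by linarith) (by linarith)
  have hfle : l₂ * Real.exp (l₂^2) * erf l₂ ≤ l₁ * Real.exp (l₁^2) * erf l₁ := by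
    rw [heq₁, heq₂]
    exact mul_le_mul_of_nonneg_left (by linarith) hc.le
  constructor
  · by_contra h
    push_neg at h
    exact absurd hfle (not_le.mpr (f_strictMono hl₁ h))
  · intro hδ'
    have hlt : δ / (p₂ + 1) < δ / (p₁ + 1) :=
      div_lt_div_of_pos_left hδ' (by linarith) (by linarith)
    have hflt : l₂ * Real.exp (l₂^2) * erf l₂ < l₁ * Real.exp (l₁^2) * erf l₁ := by
      rw [heq₁, heq₂]
      exact mul_lt_mul_of_pos_left (by linarith) hc
    by_contra h
    push_neg at h
    rcases eq_or_lt_of_le h with rfl | h'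
    · exact absurd hflt (lt_irrefl _)
    · exact absurd hflt (not_lt.mpr (f_strictMono hl₁ h').le)
end
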